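/- Let p, q, x, y ∈ ℂ with |p| < 1, q ≠ 0, x ≠ 0, y ≠ 0, and assume θ(x q^i; p) ≠ 0 and θ(y q^i; p) ≠ 0 for every integer i. Let (x; q, p)_• : ℤ → ℂ be the unique function with (x; q, p)_0 = 1 and (x; q, p)_i = (x; q, p)_{i−1} · θ(x q^{i−1}; p) for all integers i, and define (y; q, p)_• analogously. Let t : ℤ → ℂ be an arbitrary sequence, define S(k,n) = ∑_{i=k+1}^{n} t(i) / ( (x; q, p)_{i−1} · (x; q, p)_i ) for integers k ≤ n, and set S(n,k) = −S(k,n) for k < n; assume S(i,k) ≠ 0 for all integers i ≠ k. For integers k ≤ n define F(n,k) = ∏_{i=k+1}^{n} 1 / ( (x; q, p)_i · (y; q, p)_{i−1} · S(i,k) ) and G(n,k) = ∏_{i=k}^{n−1} 1 / ( (x; q, p)_{i+1} · (y; q, p)_i · S(i,n) ). Then for all integers k ≤ n, ∑_{i=k}^{n} F(n,i)·G(i,k) equals 1 if n = k and equals 0 if n > k. -/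

import Mathlib

/-- The modified Jacobi theta function
`θ(z; p) = ∏_{i=0}^{∞} (1 - z p^i)(1 - (p/z) p^i)`. -/
noncomputable def modJacobiTheta (z p : ℂ) : ℂ :=
  ∏' i : ℕ, ((1 - z * p ^ i) * (1 - (p / z) * p ^ i))

private lemma lagrange_key {ι : Type*} [DecidableEq ι] (s : Finset ι) (v : ι → ℂ)
    (hvs : Set.InjOn v s) (h2 : 2 ≤ s.card) :
    ∑ i ∈ s, ∏ j ∈ s.erase i, (v i - v j)⁻¹ = 0 := by
  have hs : s.Nonempty := Finset.card_pos.mp (by omega)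
  have hsum := Lagrange.sum_basis hvs hs
  have hcoeff := congrArg (fun P : Polynomial ℂ => P.coeff (s.card - 1)) hsum
  simp only [Polynomial.finset_sum_coeff, Polynomial.coeff_one] at hcoeff
  rw [if_neg (by omega)] at hcoeff
  rw [← hcoeff]
  refine Finset.sum_congr rfl fun i hi => ?_
  have hnd := Lagrange.natDegree_basis hvs hi
  rw [← hnd, Polynomial.coeff_natDegree, Lagrange.basis, Polynomial.leadingCoeff_prod]
  refine Finset.prod_congr rfl fun j hj => ?_
  obtain ⟨hji, hjs⟩ := Finset.mem_erase.mp hj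
  rw [Lagrange.basisDivisor, Polynomial.leadingCoeff_mul, Polynomial.leadingCoeff_C,
    (Polynomial.monic_X_sub_C (v j)).leadingCoeff, mul_one]

private lemma shift_prod (a b c : ℤ) (f : ℤ → ℂ) :
    (∏ j ∈ Finset.Icc a b, f (j + c)) = ∏ j ∈ Finset.Icc (a + c) (b + c), f j := by
  rw [← Finset.map_add_right_Icc a b c, Finset.prod_map]
  rfl

/-- Example 4.4 of Wang–Ma: a new elliptic matrix inversion.
Here `Px i` realizes the bilateral elliptic shifted factorial `(x; q, p)_i`
(so `Px 0 = 1` and `Px i = Px (i-1) * θ(x q^{i-1}; p)` for all `i : ℤ`),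
similarly `Py`, and `S k n = ∑_{i=k+1}^{n} t i / (Px (i-1) * Px i)` for
`k ≤ n`, extended antisymmetrically. -/
theorem new_elliptic_matrix_inversion
    (p q x y : ℂ)
    (hp : ‖p‖ < 1) (hq : q ≠ 0) (hx : x ≠ 0) (hy : y ≠ 0)
    (hθx : ∀ i : ℤ, modJacobiTheta (x * q ^ i) p ≠ 0)
    (hθy : ∀ i : ℤ, modJacobiTheta (y * q ^ i) p ≠ 0)
    (Px Py : ℤ → ℂ)
    (hPx0 : Px 0 = 1)
    (hPx : ∀ i : ℤ, Px i = Px (i - 1) * modJacobiTheta (x * q ^ (i - 1)) p)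
    (hPy0 : Py 0 = 1)
    (hPy : ∀ i : ℤ, Py i = Py (i - 1) * modJacobiTheta (y * q ^ (i - 1)) p)
    (t : ℤ → ℂ)
    (S : ℤ → ℤ → ℂ)
    (hS : ∀ k n : ℤ, k ≤ n →
      S k n = ∑ i ∈ Finset.Icc (k + 1) n, t i / (Px (i - 1) * Px i))
    (hSanti : ∀ k n : ℤ, k < n → S n k = -S k n)
    (hSne : ∀ i k : ℤ, i ≠ k → S i k ≠ 0) :
    ∀ k n : ℤ, k ≤ n →
      (∑ i ∈ Finset.Icc k n,
        -- F(n,i)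
        (∏ j ∈ Finset.Icc (i + 1) n, 1 / (Px j * Py (j - 1) * S j i)) *
        -- G(i,k)
        (∏ j ∈ Finset.Icc k (i - 1), 1 / (Px (j + 1) * Py j * S j i))) =
      if n = k then 1 else 0 := by
  intro k n hkn
  set v : ℤ → ℂ := fun m => S k m with hv
  have hsplit : ∀ a b : ℤ, k ≤ a → a ≤ b → S k a + S a b = S k b := by
    intro a b hka hab
    rw [hS k a hka, hS a b hab, hS k b (hka.trans hab),
      show Finset.Icc (k + 1) b = Finset.Icc (k + 1) a ∪ Finset.Icc (a + 1) b from by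
        ext m; simp only [Finset.mem_Icc, Finset.mem_union]; omega,
      Finset.sum_union (by
        rw [Finset.disjoint_left]; intro m hm1 hm2
        simp only [Finset.mem_Icc] at hm1 hm2; omega)]
  have hSv : ∀ a b : ℤ, k ≤ a → k ≤ b → a ≠ b → S a b = v b - v a := by
    intro a b hka hkb hab
    rcases lt_or_gt_of_ne hab with h | h
    · exact eq_sub_of_add_eq' (hsplit a b hka h.le)
    · rw [hSanti b a h, eq_sub_of_add_eq' (hsplit b a hkb h.le), neg_sub]
  have hinj : Set.InjOn v (Finset.Icc k n : Set ℤ) := by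
    intro a ha b hb hab
    by_contra hne
    simp only [Finset.coe_Icc, Set.mem_Icc] at ha hb
    exact hSne a b hne (by rw [hSv a b ha.1 hb.1 hne, hab, sub_self])
  have hterm : ∀ i ∈ Finset.Icc k n,
      (∏ j ∈ Finset.Icc (i + 1) n, 1 / (Px j * Py (j - 1) * S j i)) *
        (∏ j ∈ Finset.Icc k (i - 1), 1 / (Px (j + 1) * Py j * S j i)) =
      (∏ j ∈ Finset.Ioc k n, (Px j)⁻¹) * (∏ j ∈ Finset.Ico k n, (Py j)⁻¹) *
        ∏ j ∈ (Finset.Icc k n).erase i, (v i - v j)⁻¹ := by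
    intro i hi
    obtain ⟨hki, hin⟩ := Finset.mem_Icc.mp hi
    simp only [one_div, mul_inv]
    rw [Finset.prod_mul_distrib, Finset.prod_mul_distrib, Finset.prod_mul_distrib,
      Finset.prod_mul_distrib]
    have hPxeq : (∏ j ∈ Finset.Icc (i + 1) n, (Px j)⁻¹) *
        ∏ j ∈ Finset.Icc k (i - 1), (Px (j + 1))⁻¹ = ∏ j ∈ Finset.Ioc k n, (Px j)⁻¹ := by
      rw [shift_prod k (i - 1) 1 (fun j => (Px j)⁻¹),
        ← Finset.prod_union (by
          rw [Finset.disjoint_left]; intro m hm1 hm2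
          simp only [Finset.mem_Icc] at hm1 hm2; omega)]
      apply Finset.prod_congr _ (fun _ _ => rfl)
      ext m; simp only [Finset.mem_union, Finset.mem_Icc, Finset.mem_Ioc]; omega
    have hPyeq : (∏ j ∈ Finset.Icc (i + 1) n, (Py (j - 1))⁻¹) *
        ∏ j ∈ Finset.Icc k (i - 1), (Py j)⁻¹ = ∏ j ∈ Finset.Ico k n, (Py j)⁻¹ := by
      have e2 : (∏ j ∈ Finset.Icc (i + 1) n, (Py (j - 1))⁻¹) =
          ∏ j ∈ Finset.Icc i (n - 1), (Py j)⁻¹ := by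
        have h := shift_prod (i + 1) n (-1) (fun j => (Py j)⁻¹)
        simp only [← sub_eq_add_neg] at h
        rw [h]
        apply Finset.prod_congr _ (fun _ _ => rfl)
        ext m; simp only [Finset.mem_Icc]; omega
      rw [e2, ← Finset.prod_union (by
          rw [Finset.disjoint_left]; intro m hm1 hm2
          simp only [Finset.mem_Icc] at hm1 hm2; omega)]
      apply Finset.prod_congr _ (fun _ _ => rfl)
      ext m; simp only [Finset.mem_union, Finset.mem_Icc, Finset.mem_Ico]; omega
    have hSeq : (∏ j ∈ Finset.Icc (i + 1) n, (S j i)⁻¹) *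
        ∏ j ∈ Finset.Icc k (i - 1), (S j i)⁻¹ =
        ∏ j ∈ (Finset.Icc k n).erase i, (v i - v j)⁻¹ := by
      rw [← Finset.prod_union (by
          rw [Finset.disjoint_left]; intro m hm1 hm2
          simp only [Finset.mem_Icc] at hm1 hm2; omega)]
      refine Finset.prod_congr (by
        ext m
        simp only [Finset.mem_union, Finset.mem_Icc, Finset.mem_erase]; omega) fun j hj => ?_
      obtain ⟨hji, hjm⟩ := Finset.mem_erase.mp hj
      obtain ⟨h1, h2⟩ := Finset.mem_Icc.mp hjm
      rw [hSv j i h1 hki hji]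
    rw [← hPxeq, ← hPyeq, ← hSeq]
    ring
  rw [Finset.sum_congr rfl hterm, ← Finset.mul_sum]
  rcases eq_or_lt_of_le hkn with heq | hlt
  · subst heq
    simp [Finset.Icc_self]
  · rw [if_neg (by omega),
      lagrange_key (Finset.Icc k n) v hinj (by rw [Int.card_Icc]; omega), mul_zero]
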